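/- For t ∈ ℝ, the function g(t) = (3/4)·sinh²(t)/(sinh(3t/2)·sinh(t/2)) (extended continuously at 0) satisfies the identity g(t) = (3/4)·(1 + (1/2)/(cosh t + 1/2)), and is therefore positive definite on ℝ. -/

import Mathlib

open Real MeasureTheory Set Finset

lemma key_identity (t : ℝ) (ht : t ≠ 0) :
    (3 / 4) * (Real.sinh t) ^ 2 / (Real.sinh (3 * t / 2) * Real.sinh (t / 2))
      = (3 / 4) * (1 + (1 / 2) / (Real.cosh t + 1 / 2)) := by
  have h2 : Real.sinh (t / 2) ≠ 0 := Real.sinh_ne_zero.2 (by intro h; apply ht; linarith)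
  have h3 : Real.sinh (3 * t / 2) ≠ 0 := Real.sinh_ne_zero.2 (by intro h; apply ht; linarith)
  have hcpos : (0:ℝ) < Real.cosh t + 1 / 2 := by nlinarith [Real.cosh_pos t]
  have hc : Real.cosh t + 1 / 2 ≠ 0 := ne_of_gt hcpos
  have key : (Real.sinh t) ^ 2 * (Real.cosh t + 1/2)
      = (Real.cosh t + 1) * (Real.sinh (3 * t / 2) * Real.sinh (t / 2)) := by
    obtain ⟨u, rfl⟩ : ∃ u, t = 2 * u := ⟨t / 2, by ring⟩
    rw [show 2 * u / 2 = u by ring, show 3 * (2 * u) / 2 = 3 * u by ring]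
    rw [Real.sinh_eq, Real.sinh_eq, Real.sinh_eq, Real.cosh_eq]
    have e2 : Real.exp (2 * u) = Real.exp u ^ 2 := by
      rw [show (2:ℝ) * u = (2:ℕ) * u by norm_num, Real.exp_nat_mul]
    have e3 : Real.exp (3 * u) = Real.exp u ^ 3 := by
      rw [show (3:ℝ) * u = (3:ℕ) * u by norm_num, Real.exp_nat_mul]
    rw [Real.exp_neg, Real.exp_neg, Real.exp_neg, e2, e3]
    field_simp
    ring
  have hsum : 1 + (1 / 2) / (Real.cosh t + 1 / 2)
      = (Real.cosh t + 1) / (Real.cosh t + 1 / 2) := by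
    field_simp
    ring
  rw [hsum]
  field_simp
  linear_combination (2:ℝ) * key

lemma quad_rpow_nonneg {d : ℕ} (x v : Fin d → ℝ) (hx : ∀ i, 0 < x i) {a : ℝ} (ha : 0 < a) :
    0 ≤ ∑ i, ∑ j, v i * v j * (1 / (x i + x j)) ^ a := by
  have hΓ : 0 < Real.Gamma a := Real.Gamma_pos_of_pos ha
  have hxy : ∀ i j : Fin d, (0:ℝ) < x i + x j := fun i j => add_pos (hx i) (hx j)
  have key : ∀ i j : Fin d, (1 / (x i + x j)) ^ a * Real.Gamma a
      = ∫ u in Ioi (0:ℝ), u ^ (a - 1) * Real.exp (-((x i + x j) * u)) :=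
    fun i j => (Real.integral_rpow_mul_exp_neg_mul_Ioi ha (hxy i j)).symm
  have hint : ∀ i j : Fin d,
      IntegrableOn (fun u : ℝ => u ^ (a - 1) * Real.exp (-((x i + x j) * u))) (Ioi 0) := by
    intro i j
    have h := integrableOn_rpow_mul_exp_neg_mul_rpow
      (by linarith : (-1:ℝ) < a - 1) (one_pos : (0:ℝ) < 1) (hxy i j)
    simp only [Real.rpow_one] at h
    refine h.congr_fun (fun u _ => ?_) measurableSet_Ioi
    congr 1
    congr 1
    ring
  have expand : ∀ u : ℝ, u ^ (a - 1) * (∑ i, v i * Real.exp (-(x i * u))) ^ 2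
      = ∑ i, ∑ j, (v i * v j) * (u ^ (a - 1) * Real.exp (-((x i + x j) * u))) := by
    intro u
    rw [sq, Finset.sum_mul_sum, Finset.mul_sum]
    refine Finset.sum_congr rfl fun i _ => ?_
    rw [Finset.mul_sum]
    refine Finset.sum_congr rfl fun j _ => ?_
    have he : Real.exp (-(x i * u)) * Real.exp (-(x j * u))
        = Real.exp (-((x i + x j) * u)) := by
      rw [← Real.exp_add]; congr 1; ring
    linear_combination (u ^ (a - 1) * (v i * v j)) * he
  have swap : (∑ i, ∑ j, v i * v j * (1 / (x i + x j)) ^ a) * Real.Gamma a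
      = ∫ u in Ioi (0:ℝ), u ^ (a - 1) * (∑ i, v i * Real.exp (-(x i * u))) ^ 2 := by
    calc (∑ i, ∑ j, v i * v j * (1 / (x i + x j)) ^ a) * Real.Gamma a
        = ∑ i, ∑ j, ∫ u in Ioi (0:ℝ),
            (v i * v j) * (u ^ (a - 1) * Real.exp (-((x i + x j) * u))) := by
          rw [Finset.sum_mul]
          refine Finset.sum_congr rfl fun i _ => ?_
          rw [Finset.sum_mul]
          refine Finset.sum_congr rfl fun j _ => ?_
          rw [mul_assoc, key i j, ← MeasureTheory.integral_const_mul]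
      _ = ∑ i, ∫ u in Ioi (0:ℝ), ∑ j,
            (v i * v j) * (u ^ (a - 1) * Real.exp (-((x i + x j) * u))) :=
          Finset.sum_congr rfl fun i _ => (MeasureTheory.integral_finset_sum _
            (fun j _ => ((hint i j).const_mul (v i * v j)))).symm
      _ = ∫ u in Ioi (0:ℝ), ∑ i, ∑ j,
            (v i * v j) * (u ^ (a - 1) * Real.exp (-((x i + x j) * u))) :=
          (MeasureTheory.integral_finset_sum _ (fun i _ =>
            MeasureTheory.integrable_finset_sum _ (fun j _ =>
              ((hint i j).const_mul (v i * v j))))).symm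
      _ = ∫ u in Ioi (0:ℝ), u ^ (a - 1) * (∑ i, v i * Real.exp (-(x i * u))) ^ 2 :=
          (MeasureTheory.setIntegral_congr_fun measurableSet_Ioi
            (fun u _ => expand u)).symm
  have hpos : 0 ≤ (∑ i, ∑ j, v i * v j * (1 / (x i + x j)) ^ a) * Real.Gamma a := by
    rw [swap]
    refine MeasureTheory.setIntegral_nonneg measurableSet_Ioi fun u hu => ?_
    exact mul_nonneg (Real.rpow_nonneg (le_of_lt hu) _) (sq_nonneg _)
  have h0 : (0:ℝ) * Real.Gamma a ≤ (∑ i, ∑ j, v i * v j * (1 / (x i + x j)) ^ a) * Real.Gamma a := by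
    rw [zero_mul]; exact hpos
  exact le_of_mul_le_mul_right h0 hΓ

lemma quad_pow_nonneg {d : ℕ} (x c : Fin d → ℝ) (hx : ∀ i, 0 < x i) (n : ℕ) :
    0 ≤ ∑ i, ∑ j, c i * c j * (x i * x j / (x i + x j) ^ 2) ^ (n + 1) := by
  have h := quad_rpow_nonneg x (fun i => c i * x i ^ (n + 1)) hx
    (a := (2 * (n + 1) : ℕ)) (by positivity)
  refine le_of_le_of_eq h (Finset.sum_congr rfl fun i _ => Finset.sum_congr rfl fun j _ => ?_)
  have hs : (0:ℝ) < x i + x j := add_pos (hx i) (hx j)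
  simp only [Real.rpow_natCast, pow_mul, div_pow, one_pow, mul_pow, one_div, inv_pow]
  rw [div_eq_mul_inv]
  ring

lemma quadK_nonneg {d : ℕ} (x c : Fin d → ℝ) (hx : ∀ i, 0 < x i) :
    0 ≤ ∑ i, ∑ j, c i * c j * (x i * x j / (x i ^ 2 + x i * x j + x j ^ 2)) := by
  have hr : ∀ i j : Fin d, HasSum (fun n : ℕ => c i * c j * (x i * x j / (x i + x j) ^ 2) ^ (n + 1))
      (c i * c j * (x i * x j / (x i ^ 2 + x i * x j + x j ^ 2))) := by
    intro i j
    have hxi := hx i; have hxj := hx j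
    set r := x i * x j / (x i + x j) ^ 2 with hrdef
    have h0 : 0 ≤ r := by positivity
    have hlt : r < 1 := by
      rw [hrdef, div_lt_one (by positivity)]
      nlinarith
    have h1r : (0:ℝ) < 1 - r := by linarith
    have hgeo := hasSum_geometric_of_lt_one h0 hlt
    have hmul := hgeo.mul_left (c i * c j * r)
    have hfun : (fun n : ℕ => (c i * c j * r) * r ^ n)
        = fun n : ℕ => c i * c j * r ^ (n + 1) := funext fun n => by rw [pow_succ]; ring
    rw [hfun] at hmul
    suffices hsuff : c i * c j * (x i * x j / (x i ^ 2 + x i * x j + x j ^ 2)) = c i * c j * r * (1 - r)⁻¹ by rw [hsuff]; exact hmul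
    have hval : x i * x j / (x i ^ 2 + x i * x j + x j ^ 2) = r * (1 - r)⁻¹ := by
      rw [hrdef]
      have hd1 : (x i + x j) ^ 2 ≠ 0 := by positivity
      have hd2 : x i ^ 2 + x i * x j + x j ^ 2 ≠ 0 := by positivity
      have h1mr : 1 - x i * x j / (x i + x j) ^ 2
          = (x i ^ 2 + x i * x j + x j ^ 2) / (x i + x j) ^ 2 := by
        field_simp; ring
      rw [h1mr, inv_div, div_mul_div_comm,
        mul_comm (x i * x j) ((x i + x j) ^ 2), mul_div_mul_left _ _ hd1]
    rw [hval]; ring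
  have total : HasSum (fun n : ℕ => ∑ i, ∑ j, c i * c j * (x i * x j / (x i + x j) ^ 2) ^ (n + 1))
      (∑ i, ∑ j, c i * c j * (x i * x j / (x i ^ 2 + x i * x j + x j ^ 2))) :=
    hasSum_sum fun i _ => hasSum_sum fun j _ => hr i j
  exact total.nonneg fun n => quad_pow_nonneg x c hx n

lemma cosh_rep (a b : ℝ) :
    (1 / 2) / (Real.cosh (a - b) + 1 / 2)
      = Real.exp a * Real.exp b
        / ((Real.exp a) ^ 2 + Real.exp a * Real.exp b + (Real.exp b) ^ 2) := by
  have h1 : Real.cosh (a - b) + 1 / 2 ≠ 0 := by nlinarith [Real.cosh_pos (a - b)]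
  have h2 : (Real.exp a) ^ 2 + Real.exp a * Real.exp b + (Real.exp b) ^ 2 ≠ 0 := by positivity
  rw [div_eq_div_iff h1 h2]
  rw [Real.cosh_eq, Real.exp_sub, neg_sub, Real.exp_sub]
  have hea := Real.exp_ne_zero a
  have heb := Real.exp_ne_zero b
  field_simp
  ring



/-- A continuous function `h : ℝ → ℝ` is positive definite if for all finite families
`t : Fin d → ℝ`, the matrix `[h (t i - t j)]` is positive semi-definite. -/
def IsPosDefFn (h : ℝ → ℝ) : Prop :=
  Continuous h ∧
    ∀ (d : ℕ) (t : Fin d → ℝ), (Matrix.of fun i j => h (t i - t j)).PosSemidef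

theorem stmt_11 (g : ℝ → ℝ)
    (hg : ∀ t, g t = if t = 0 then 1
        else (3 / 4) * (Real.sinh t) ^ 2 / (Real.sinh (3 * t / 2) * Real.sinh (t / 2))) :
    (∀ t, g t = (3 / 4) * (1 + (1 / 2) / (Real.cosh t + 1 / 2))) ∧ IsPosDefFn g := by
  have closed : ∀ t, g t = (3 / 4) * (1 + (1 / 2) / (Real.cosh t + 1 / 2)) := by
    intro t
    rw [hg t]
    split_ifs with h
    · subst h
      rw [Real.cosh_zero]
      norm_num
    · exact key_identity t h
  refine ⟨closed, ?_, ?_⟩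
  · -- continuity
    have hfun : g = fun t => (3 / 4) * (1 + (1 / 2) / (Real.cosh t + 1 / 2)) := funext closed
    rw [hfun]
    refine continuous_const.mul (continuous_const.add (continuous_const.div
      (Real.continuous_cosh.add continuous_const) fun t => ?_))
    nlinarith [Real.cosh_pos t]
  · -- positive semidefiniteness
    intro d t
    refine Matrix.PosSemidef.of_dotProduct_mulVec_nonneg ?_ ?_
    · -- Hermitian
      ext i j
      simp only [Matrix.conjTranspose_apply, Matrix.of_apply, star_trivial]
      rw [closed, closed, show t j - t i = -(t i - t j) by ring, Real.cosh_neg]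
    · intro c
      set x : Fin d → ℝ := fun i => Real.exp (t i) with hxdef
      have hx : ∀ i, 0 < x i := fun i => Real.exp_pos _
      have hdot : dotProduct (star c) ((Matrix.of fun i j => g (t i - t j)).mulVec c)
          = ∑ i, ∑ j, c i * c j * g (t i - t j) := by
        simp only [star_trivial, dotProduct, Matrix.mulVec, Matrix.of_apply,
          Finset.mul_sum]
        refine Finset.sum_congr rfl fun i _ => Finset.sum_congr rfl fun j _ => by ring
      rw [hdot]
      have hpt : ∀ i j, c i * c j * g (t i - t j)
          = 3 / 4 * (c i * c j)
            + 3 / 4 * (c i * c j * (x i * x j / (x i ^ 2 + x i * x j + x j ^ 2))) := by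
        intro i j
        rw [closed, cosh_rep (t i) (t j)]
        ring
      calc (0:ℝ) ≤ 3 / 4 * (∑ i, c i) ^ 2
            + 3 / 4 * ∑ i, ∑ j, c i * c j * (x i * x j / (x i ^ 2 + x i * x j + x j ^ 2)) := by
            have h := quadK_nonneg x c hx
            have h2 : (0:ℝ) ≤ 3 / 4 * (∑ i, c i) ^ 2 := by positivity
            nlinarith
        _ = ∑ i, ∑ j, (3 / 4 * (c i * c j)
              + 3 / 4 * (c i * c j * (x i * x j / (x i ^ 2 + x i * x j + x j ^ 2)))) := by
            have e1 : ∑ i, ∑ j, (3 / 4 * (c i * c j)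
                + 3 / 4 * (c i * c j * (x i * x j / (x i ^ 2 + x i * x j + x j ^ 2))))
                = (∑ i, ∑ j, 3 / 4 * (c i * c j))
                  + ∑ i, ∑ j, 3 / 4 * (c i * c j
                      * (x i * x j / (x i ^ 2 + x i * x j + x j ^ 2))) := by
              simp [Finset.sum_add_distrib]
            have e2 : ∑ i, ∑ j, 3 / 4 * (c i * c j) = 3 / 4 * (∑ i, c i) ^ 2 := by
              rw [sq, Finset.sum_mul_sum, Finset.mul_sum]
              exact Finset.sum_congr rfl fun i _ => by rw [Finset.mul_sum]
            have e3 : ∑ i, ∑ j, 3 / 4 * (c i * c j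
                  * (x i * x j / (x i ^ 2 + x i * x j + x j ^ 2)))
                = 3 / 4 * ∑ i, ∑ j, c i * c j
                    * (x i * x j / (x i ^ 2 + x i * x j + x j ^ 2)) := by
              rw [Finset.mul_sum]
              exact Finset.sum_congr rfl fun i _ => by rw [Finset.mul_sum]
            rw [e1, e2, e3]
        _ = ∑ i, ∑ j, c i * c j * g (t i - t j) :=
            Finset.sum_congr rfl fun i _ => Finset.sum_congr rfl fun j _ => (hpt i j).symm
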